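/- Let T be a bounded linear operator on a Banach space X and let x ∈ X. If 0 ∈ J_T^mix(x), then J_T^mix(x) = J_T^mix(0). -/
import Mathlib


open Filter Topology

/-- The extended mixing limit set `J_T^mix(x)`: all `y` for which there exists a
sequence `(x_n)` with `x_n → x` and `T^n x_n → y`. -/
noncomputable def Jmix {X : Type*} [SeminormedAddCommGroup X] [NormedSpace ℂ X]
    (T : X →L[ℂ] X) (x : X) : Set X :=
  {y | ∃ u : ℕ → X, Tendsto u atTop (𝓝 x) ∧ Tendsto (fun n => (T ^ n) (u n)) atTop (𝓝 y)}

/-- If `0 ∈ J_T^mix(x)`, then `J_T^mix(x) = J_T^mix(0)`. -/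
theorem stmt8 {X : Type*} [NormedAddCommGroup X] [NormedSpace ℂ X] [CompleteSpace X]
    (T : X →L[ℂ] X) (x : X) (h : (0 : X) ∈ Jmix T x) :
    Jmix T x = Jmix T 0 := by
  obtain ⟨w, hw, hw0⟩ := h
  ext y
  constructor
  · rintro ⟨u, hu, hTu⟩
    refine ⟨fun n => u n - w n, by simpa using hu.sub hw, ?_⟩
    have := hTu.sub hw0
    simpa [map_sub] using this
  · rintro ⟨v, hv, hTv⟩
    refine ⟨fun n => v n + w n, by simpa using hv.add hw, ?_⟩
    have := hTv.add hw0
    simpa [map_add] using this
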